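/- For 0 < N < 1 and 0 < α < 1, ∑_{k=0}^∞ (∑_{i=0}^k N^{k-i} α^i)² = ∑_{i=1}^∞ i·α^{i-1}·N^{i-1}/(1-N²) + ∑_{i=1}^∞ i·N^{i-1}·α^{i+1}/(1-α²). -/

import Mathlib

open Finset

private lemma summable_add_one_mul_geo {r : ℝ} (hr : |r| < 1) :
    Summable (fun n : ℕ => ((n : ℝ) + 1) * r ^ n) := by
  have h1 : Summable (fun n : ℕ => (n : ℝ) ^ 1 * r ^ n) :=
    summable_pow_mul_geometric_of_norm_lt_one 1 (by rwa [Real.norm_eq_abs])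
  have h0 : Summable (fun n : ℕ => r ^ n) :=
    summable_geometric_of_norm_lt_one (by rwa [Real.norm_eq_abs])
  exact (h1.add h0).congr (fun n => by ring)

private lemma summable_add_one_sq_mul_geo {r : ℝ} (hr : |r| < 1) :
    Summable (fun n : ℕ => ((n : ℝ) + 1) ^ 2 * r ^ n) := by
  have h2 : Summable (fun n : ℕ => (n : ℝ) ^ 2 * r ^ n) :=
    summable_pow_mul_geometric_of_norm_lt_one 2 (by rwa [Real.norm_eq_abs])
  have h1 : Summable (fun n : ℕ => (n : ℝ) ^ 1 * r ^ n) :=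
    summable_pow_mul_geometric_of_norm_lt_one 1 (by rwa [Real.norm_eq_abs])
  have h0 : Summable (fun n : ℕ => r ^ n) :=
    summable_geometric_of_norm_lt_one (by rwa [Real.norm_eq_abs])
  exact ((h2.add (h1.mul_left 2)).add h0).congr (fun n => by ring)

private lemma tsum_add_one_mul_geo {r : ℝ} (h0 : 0 ≤ r) (h1 : r < 1) :
    ∑' n : ℕ, ((n : ℝ) + 1) * r ^ n = 1 / (1 - r) ^ 2 := by
  have hr : |r| < 1 := abs_lt.mpr ⟨by linarith, h1⟩
  have hne : (1 : ℝ) - r ≠ 0 := by intro h; nlinarith [h]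
  have hs1 : Summable (fun n : ℕ => (n : ℝ) * r ^ n) := by
    have := summable_pow_mul_geometric_of_norm_lt_one (R := ℝ) 1 (by rwa [Real.norm_eq_abs])
    exact this.congr (fun n => by ring)
  have hs0 : Summable (fun n : ℕ => r ^ n) :=
    summable_geometric_of_norm_lt_one (by rwa [Real.norm_eq_abs])
  calc ∑' n : ℕ, ((n : ℝ) + 1) * r ^ n
      = ∑' n : ℕ, ((n : ℝ) * r ^ n + r ^ n) := tsum_congr fun n => by ring
    _ = (∑' n : ℕ, (n : ℝ) * r ^ n) + ∑' n : ℕ, r ^ n := Summable.tsum_add hs1 hs0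
    _ = r / (1 - r) ^ 2 + (1 - r)⁻¹ := by
        rw [tsum_coe_mul_geometric_of_norm_lt_one (by rwa [Real.norm_eq_abs]),
          tsum_geometric_of_lt_one h0 h1]
    _ = 1 / (1 - r) ^ 2 := by field_simp; ring

/-- The split of ∑_k (∑_{i=0}^k N^{k-i} α^i)² into two series (series indexed from i = 1
in the paper, reindexed here as i ≥ 0 via i ↦ i+1). -/
theorem tsum_split (N α : ℝ) (hN0 : 0 < N) (hN1 : N < 1) (hα0 : 0 < α) (hα1 : α < 1) :
    ∑' k : ℕ, (∑ i ∈ Finset.range (k + 1), N ^ (k - i) * α ^ i) ^ 2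
      = (∑' i : ℕ, ((i + 1 : ℕ) : ℝ) * α ^ i * N ^ i / (1 - N ^ 2))
        + ∑' i : ℕ, ((i + 1 : ℕ) : ℝ) * N ^ i * α ^ (i + 2) / (1 - α ^ 2) := by
  set m : ℝ := max N α with hm
  have hm0 : 0 < m := lt_max_of_lt_left hN0
  have hm1 : m < 1 := max_lt hN1 hα1
  have hNm : N ≤ m := le_max_left _ _
  have hαm : α ≤ m := le_max_right _ _
  set S : ℕ → ℝ := fun k => ∑ i ∈ Finset.range (k + 1), N ^ (k - i) * α ^ i with hSdef
  -- basic facts about S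
  have hS0 : S 0 = 1 := by simp [hSdef]
  have hSnonneg : ∀ k, 0 ≤ S k := fun k =>
    Finset.sum_nonneg fun i _ => mul_nonneg (pow_nonneg hN0.le _) (pow_nonneg hα0.le _)
  have hSle : ∀ k, S k ≤ ((k : ℝ) + 1) * m ^ k := by
    intro k
    have : S k ≤ ∑ i ∈ Finset.range (k + 1), m ^ k := by
      apply Finset.sum_le_sum
      intro i hi
      have hik : i ≤ k := Nat.lt_succ_iff.mp (Finset.mem_range.mp hi)
      have h1 : N ^ (k - i) * α ^ i ≤ m ^ (k - i) * m ^ i :=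
        mul_le_mul (pow_le_pow_left₀ hN0.le hNm _) (pow_le_pow_left₀ hα0.le hαm _)
          (pow_nonneg hα0.le _) (pow_nonneg hm0.le _)
      rwa [← pow_add, Nat.sub_add_cancel hik] at h1
    simpa using this
  have hrec : ∀ k, S (k + 1) = N * S k + α ^ (k + 1) := by
    intro k
    show ∑ i ∈ Finset.range (k + 1 + 1), N ^ (k + 1 - i) * α ^ i = _
    rw [Finset.sum_range_succ]
    congr 1
    · rw [Finset.mul_sum]
      apply Finset.sum_congr rfl
      intro i hi
      have hik : i ≤ k := Nat.lt_succ_iff.mp (Finset.mem_range.mp hi)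
      rw [show k + 1 - i = (k - i) + 1 by omega, pow_succ']
      ring
    · simp
  -- summability
  have hm2 : |m ^ 2| < 1 := by rw [abs_of_nonneg (sq_nonneg m)]; nlinarith
  have hαm2 : |α * m| < 1 := by rw [abs_of_nonneg (by positivity)]; nlinarith
  have hdom1 : Summable (fun k : ℕ => ((k : ℝ) + 1) ^ 2 * (m ^ 2) ^ k) :=
    summable_add_one_sq_mul_geo hm2
  have hSsq : Summable (fun k => (S k) ^ 2) := by
    refine Summable.of_nonneg_of_le (fun k => sq_nonneg _) (fun k => ?_) hdom1
    have := pow_le_pow_left₀ (hSnonneg k) (hSle k) 2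
    calc (S k) ^ 2 ≤ (((k : ℝ) + 1) * m ^ k) ^ 2 := this
      _ = ((k : ℝ) + 1) ^ 2 * (m ^ 2) ^ k := by rw [mul_pow, ← pow_mul, ← pow_mul, Nat.mul_comm]
  have hdom2 : Summable (fun k : ℕ => ((k : ℝ) + 1) * (α * m) ^ k) :=
    summable_add_one_mul_geo hαm2
  have hαS : Summable (fun k => α ^ k * S k) := by
    refine Summable.of_nonneg_of_le
      (fun k => mul_nonneg (pow_nonneg hα0.le _) (hSnonneg k)) (fun k => ?_) hdom2
    calc α ^ k * S k ≤ α ^ k * (((k : ℝ) + 1) * m ^ k) :=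
          mul_le_mul_of_nonneg_left (hSle k) (pow_nonneg hα0.le _)
      _ = ((k : ℝ) + 1) * (α * m) ^ k := by rw [mul_pow]; ring
  have hα2 : (0:ℝ) ≤ α ^ 2 := sq_nonneg α
  have hα2lt : α ^ 2 < 1 := by nlinarith
  have hgeoα2 : Summable (fun k : ℕ => (α ^ 2) ^ k) := summable_geometric_of_lt_one hα2 hα2lt
  -- nonzero denominators
  have hne1 : (1:ℝ) - α ^ 2 ≠ 0 := by nlinarith
  have hne2 : (1:ℝ) - N ^ 2 ≠ 0 := by nlinarith
  have hne3 : (1:ℝ) - α * N ≠ 0 := by nlinarith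
  set U : ℝ := ∑' k, α ^ k * S k with hUdef
  set T : ℝ := ∑' k, (S k) ^ 2 with hTdef
  -- equation for U
  have hUeq : U = 1 + α * N * U + α ^ 2 * (1 - α ^ 2)⁻¹ := by
    have h1 : ∑' k, α ^ k * S k = α ^ 0 * S 0 + ∑' k, α ^ (k + 1) * S (k + 1) :=
      Summable.tsum_eq_zero_add hαS
    have h2 : ∑' k, α ^ (k + 1) * S (k + 1)
        = ∑' k, (α * N * (α ^ k * S k) + α ^ 2 * (α ^ 2) ^ k) :=
      tsum_congr fun k => by rw [hrec k]; ring
    have h3 : ∑' k, (α * N * (α ^ k * S k) + α ^ 2 * (α ^ 2) ^ k)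
        = α * N * U + α ^ 2 * (1 - α ^ 2)⁻¹ := by
      rw [Summable.tsum_add (hαS.mul_left _) (hgeoα2.mul_left _), tsum_mul_left, tsum_mul_left,
        tsum_geometric_of_lt_one hα2 hα2lt]
    rw [h2, h3, hS0] at h1
    conv_lhs => rw [hUdef, h1]
    ring
  -- equation for T
  have hTeq : T = 1 + N ^ 2 * T + 2 * N * α * U + α ^ 2 * (1 - α ^ 2)⁻¹ := by
    have h1 : ∑' k, (S k) ^ 2 = (S 0) ^ 2 + ∑' k, (S (k + 1)) ^ 2 := Summable.tsum_eq_zero_add hSsq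
    have h2 : ∑' k, (S (k + 1)) ^ 2
        = ∑' k, (N ^ 2 * (S k) ^ 2 + (2 * N * α * (α ^ k * S k) + α ^ 2 * (α ^ 2) ^ k)) :=
      tsum_congr fun k => by rw [hrec k]; ring
    have h3 : ∑' k, (N ^ 2 * (S k) ^ 2 + (2 * N * α * (α ^ k * S k) + α ^ 2 * (α ^ 2) ^ k))
        = N ^ 2 * T + (2 * N * α * U + α ^ 2 * (1 - α ^ 2)⁻¹) := by
      rw [Summable.tsum_add (hSsq.mul_left _) ((hαS.mul_left _).add (hgeoα2.mul_left _)),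
        Summable.tsum_add (hαS.mul_left _) (hgeoα2.mul_left _), tsum_mul_left, tsum_mul_left,
        tsum_mul_left, tsum_geometric_of_lt_one hα2 hα2lt]
    rw [h2, h3, hS0] at h1
    conv_lhs => rw [hTdef, h1]
    ring
  have hUval : U = 1 / ((1 - α ^ 2) * (1 - α * N)) := by
    field_simp at hUeq ⊢
    linear_combination hUeq
  rw [hUval] at hTeq
  have hTval : T = (1 + α * N) / ((1 - N ^ 2) * (1 - α ^ 2) * (1 - α * N)) := by
    have hne3' : (1:ℝ) - N * α ≠ 0 := by rw [mul_comm]; exact hne3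
    field_simp at hTeq ⊢
    linear_combination hTeq
  -- compute the two series on the right
  have hαN0 : (0:ℝ) ≤ α * N := by positivity
  have hαN1 : α * N < 1 := by nlinarith
  have hA : (∑' i : ℕ, ((i + 1 : ℕ) : ℝ) * α ^ i * N ^ i / (1 - N ^ 2))
      = (1 / (1 - α * N) ^ 2) / (1 - N ^ 2) := by
    rw [← tsum_add_one_mul_geo hαN0 hαN1, ← tsum_div_const]
    exact tsum_congr fun i => by push_cast; rw [mul_pow]; ring
  have hB : (∑' i : ℕ, ((i + 1 : ℕ) : ℝ) * N ^ i * α ^ (i + 2) / (1 - α ^ 2))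
      = (1 / (1 - α * N) ^ 2) * α ^ 2 / (1 - α ^ 2) := by
    rw [← tsum_add_one_mul_geo hαN0 hαN1, ← tsum_mul_right, ← tsum_div_const]
    exact tsum_congr fun i => by push_cast; rw [mul_pow, pow_add]; ring
  rw [hA, hB, hTval]
  field_simp
  ring
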